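/- Let A ⊆ P([n]) be a left-compressed down-set with |A| ≥ 2 and n ≥ 2. Set ℓ = min{ ⌈ 2·log₂|A| / (log₂ n − log₂ log₂ |A|) ⌉, ⌊log₂ |A|⌋ } and β = ⌊ (n / log₂|A|)^{1/2} · ℓ ⌋. Then for every x ∈ A, the number of elements of x that exceed β is at most ℓ, i.e. |x ∩ {β+1, …, n}| ≤ ℓ. -/

import Mathlib

private lemma bern (l : ℕ) : ∀ m : ℕ, l^(m+1) + (m+1) * l^m ≤ (l+1)^(m+1) := by
  intro m
  induction m with
  | zero => simp [pow_one]
  | succ m ih =>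
    calc l^(m+2) + (m+2)*l^(m+1)
        ≤ (l^(m+1) + (m+1)*l^m) * (l+1) := by
          have expand : (l^(m+1) + (m+1)*l^m) * (l+1)
              = l^(m+2) + (m+2)*l^(m+1) + (m+1)*l^m := by ring
          omega
      _ ≤ (l+1)^(m+1) * (l+1) := Nat.mul_le_mul_right _ ih
      _ = (l+1)^(m+2) := by ring

private lemma two_mul_pow (l : ℕ) : 2 * l^(l+1) ≤ (l+1)^(l+1) := by
  have h := bern l l
  have : 2 * l^(l+1) = l^(l+1) + l * l^l := by ring
  calc 2 * l^(l+1) = l^(l+1) + l * l^l := by ring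
    _ ≤ l^(l+1) + (l+1) * l^l := by
        have : l * l^l ≤ (l+1) * l^l := Nat.mul_le_mul_right _ (by omega)
        omega
    _ ≤ (l+1)^(l+1) := h

private lemma lemA : ∀ l : ℕ, 2 ≤ l → 2^l * Nat.factorial l ≤ l^(l+1) := by
  intro l hl
  induction l, hl using Nat.le_induction with
  | base => decide
  | succ l hl ih =>
    calc 2^(l+1) * Nat.factorial (l+1) = (l+1) * 2 * (2^l * Nat.factorial l) := by
          rw [Nat.factorial_succ]; ring
      _ ≤ (l+1) * 2 * l^(l+1) := Nat.mul_le_mul_left _ ih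
      _ = (l+1) * (2 * l^(l+1)) := by ring
      _ ≤ (l+1) * (l+1)^(l+1) := Nat.mul_le_mul_left _ (two_mul_pow l)
      _ = (l+1)^(l+2) := by ring

open Finset in
private lemma hall_mem {n : ℕ} {A : Finset (Finset ℕ)}
    (hsub : ∀ x ∈ A, x ⊆ Finset.Icc 1 n)
    (hdown : ∀ x ∈ A, ∀ y ⊆ x, y ∈ A)
    (hcomp : ∀ i j : ℕ, 1 ≤ i → i < j → j ≤ n →
      ∀ x ∈ A, j ∈ x → i ∉ x → insert i (x.erase j) ∈ A) :
    ∀ k : ℕ, ∀ S T : Finset ℕ, (S \ T).card = k → T ∈ A →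
      (∀ s ∈ S, 1 ≤ s) →
      (∀ x : ℕ, (S.filter (x < ·)).card ≤ (T.filter (x < ·)).card) → S ∈ A := by
  intro k
  induction k with
  | zero =>
    intro S T h hT _ _
    exact hdown T hT S (sdiff_eq_empty_iff_subset.mp (card_eq_zero.mp h))
  | succ k ih =>
    intro S T hcard hT hS1 hall
    have hSTne : (S \ T).Nonempty := by rw [← card_pos, hcard]; omega
    have h0 : S.card ≤ T.card := by
      have h1 : S.filter (0 < ·) = S := filter_true_of_mem (fun s hs => hS1 s hs)
      calc S.card = (S.filter (0 < ·)).card := by rw [h1]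
        _ ≤ (T.filter (0 < ·)).card := hall 0
        _ ≤ T.card := card_filter_le _ _
    have hTScard : (S \ T).card ≤ (T \ S).card := by
      have hS' := Finset.card_sdiff_add_card_inter S T
      have hT' := Finset.card_sdiff_add_card_inter T S
      rw [Finset.inter_comm] at hT'
      omega
    have hTSne : (T \ S).Nonempty := by rw [← card_pos]; omega
    set i := (S \ T).max' hSTne with hi
    set j := (T \ S).max' hTSne with hj
    have hiS' : i ∈ S := (mem_sdiff.mp ((S \ T).max'_mem hSTne)).1
    have hiT : i ∉ T := (mem_sdiff.mp ((S \ T).max'_mem hSTne)).2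
    have hjT' : j ∈ T := (mem_sdiff.mp ((T \ S).max'_mem hTSne)).1
    have hjS : j ∉ S := (mem_sdiff.mp ((T \ S).max'_mem hTSne)).2
    have hlt : ∀ e ∈ S \ T, e < j := by
      intro e he
      by_contra hle
      push_neg at hle
      have heS : e ∈ S := (mem_sdiff.mp he).1
      have heT : e ∉ T := (mem_sdiff.mp he).2
      have hejne : e ≠ j := fun h => hjS (h ▸ heS)
      have hej : j < e := lt_of_le_of_ne hle (Ne.symm hejne)
      have hsub2 : T.filter (j < ·) ⊆ (S.filter (j < ·)).erase e := by
        intro u hu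
        rw [mem_filter] at hu
        have huS : u ∈ S := by
          by_contra huS
          exact absurd (le_max' _ u (mem_sdiff.mpr ⟨hu.1, huS⟩)) (not_le.mpr hu.2)
        refine mem_erase.mpr ⟨?_, mem_filter.mpr ⟨huS, hu.2⟩⟩
        rintro rfl; exact heT hu.1
      have h1 : (S.filter (j < ·)).card ≤ (T.filter (j < ·)).card := hall j
      have h2 : (T.filter (j < ·)).card ≤ ((S.filter (j < ·)).erase e).card :=
        card_le_card hsub2
      have he' : e ∈ S.filter (j < ·) := mem_filter.mpr ⟨heS, hej⟩
      have h3 : ((S.filter (j < ·)).erase e).card < (S.filter (j < ·)).card :=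
        card_erase_lt_of_mem he'
      omega
    have hij : i < j := hlt i ((S \ T).max'_mem hSTne)
    have hjn : j ≤ n := (Finset.mem_Icc.mp (hsub T hT hjT')).2
    set T2 := insert i (T.erase j) with hT2
    have hT2A : T2 ∈ A := hcomp i j (hS1 i hiS') hij hjn T hT hjT' hiT
    have hmeas : (S \ T2).card = k := by
      have hset : S \ T2 = (S \ T).erase i := by
        ext e
        simp only [hT2, mem_sdiff, mem_erase, mem_insert]
        constructor
        · rintro ⟨heS, h2⟩
          push_neg at h2
          refine ⟨h2.1, heS, fun heT => ?_⟩
          have hej : e ≠ j := fun h => hjS (h ▸ heS)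
          exact h2.2 hej heT
        · rintro ⟨hei, heS, heT⟩
          refine ⟨heS, ?_⟩
          push_neg
          exact ⟨hei, fun _ => heT⟩
      rw [hset, card_erase_of_mem ((S \ T).max'_mem hSTne), hcard]; omega
    have hall2 : ∀ x : ℕ, (S.filter (x < ·)).card ≤ (T2.filter (x < ·)).card := by
      intro x
      by_cases hxi : x < i
      · have hxj : x < j := hxi.trans hij
        have hfe : T2.filter (x < ·) = insert i ((T.filter (x < ·)).erase j) := by
          rw [hT2, filter_insert, if_pos hxi, filter_erase]
        have hjf : j ∈ T.filter (x < ·) := mem_filter.mpr ⟨hjT', hxj⟩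
        have hpos : 0 < (T.filter (x < ·)).card := card_pos.mpr ⟨j, hjf⟩
        have hnotmem : i ∉ (T.filter (x < ·)).erase j :=
          fun h => hiT (mem_filter.mp (mem_of_mem_erase h)).1
        rw [hfe, card_insert_of_notMem hnotmem, card_erase_of_mem hjf]
        have := hall x
        omega
      · push_neg at hxi
        apply card_le_card
        intro e he
        rw [mem_filter] at he
        have heT : e ∈ T := by
          by_contra heT
          have hle : e ≤ i := le_max' _ e (mem_sdiff.mpr ⟨he.1, heT⟩)
          omega
        have hej : e ≠ j := fun h => hjS (h ▸ he.1)
        exact mem_filter.mpr ⟨mem_insert_of_mem (mem_erase.mpr ⟨hej, heT⟩), he.2⟩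
    exact ih S T2 hmeas hT2A hS1 hall2

open Finset

theorem stmt17 (n : ℕ) (hn : 2 ≤ n) (A : Finset (Finset ℕ))
    (hsub : ∀ x ∈ A, x ⊆ Finset.Icc 1 n)
    (hdown : ∀ x ∈ A, ∀ y ⊆ x, y ∈ A)
    (hcomp : ∀ i j : ℕ, 1 ≤ i → i < j → j ≤ n →
      ∀ x ∈ A, j ∈ x → i ∉ x → insert i (x.erase j) ∈ A)
    (hA2 : 2 ≤ A.card) :
    ∀ x ∈ A,
      ((x.filter (fun j : ℕ =>
          (⌊Real.sqrt ((n : ℝ) / Real.logb 2 A.card) *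
            (if Real.logb 2 (Real.logb 2 A.card) < Real.logb 2 n then
              min (⌈2 * Real.logb 2 A.card /
                    (Real.logb 2 n - Real.logb 2 (Real.logb 2 A.card))⌉ : ℝ)
                (⌊Real.logb 2 A.card⌋ : ℝ)
            else (⌊Real.logb 2 A.card⌋ : ℝ))⌋ : ℤ) < (j : ℤ))).card : ℝ)
      ≤ (if Real.logb 2 (Real.logb 2 A.card) < Real.logb 2 n then
          min (⌈2 * Real.logb 2 A.card /
                (Real.logb 2 n - Real.logb 2 (Real.logb 2 A.card))⌉ : ℝ)
            (⌊Real.logb 2 A.card⌋ : ℝ)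
        else (⌊Real.logb 2 A.card⌋ : ℝ)) := by
  intro x hx
  have ha2 : (2:ℝ) ≤ (A.card : ℝ) := by exact_mod_cast hA2
  have ha0 : (0:ℝ) < (A.card : ℝ) := by linarith
  set L : ℝ := Real.logb 2 (A.card : ℝ) with hLdef
  have hL1 : 1 ≤ L := by
    rw [hLdef]
    have : Real.logb 2 2 ≤ Real.logb 2 (A.card : ℝ) :=
      Real.logb_le_logb_of_le one_lt_two (by norm_num) ha2
    simpa using this
  have hL0 : 0 < L := by linarith
  -- every member of A has card ≤ L
  have hcardL : ∀ y ∈ A, (y.card : ℝ) ≤ L := by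
    intro y hy
    have hpowsub : y.powerset ⊆ A := fun z hz => hdown y hy z (mem_powerset.mp hz)
    have hcard : 2 ^ y.card ≤ A.card := by
      have := card_le_card hpowsub
      rwa [card_powerset] at this
    have hr : (2:ℝ) ^ (y.card : ℝ) ≤ (A.card : ℝ) := by
      rw [Real.rpow_natCast]
      exact_mod_cast hcard
    have := Real.logb_le_logb_of_le one_lt_two (by positivity) hr
    rwa [Real.logb_rpow (by norm_num) (by norm_num)] at this
  -- the trivial bound : count ≤ x.card ≤ ⌊L⌋
  have heasy : ∀ p : ℕ → Prop, ∀ dp : DecidablePred p,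
      ((x.filter p).card : ℝ) ≤ ((⌊L⌋ : ℤ) : ℝ) := by
    intro p dp
    have h1 : (x.filter p).card ≤ x.card := card_filter_le _ _
    have h2 : ((x.card : ℤ) : ℝ) ≤ L := by push_cast; exact hcardL x hx
    have h3 : (x.card : ℤ) ≤ ⌊L⌋ := Int.le_floor.mpr h2
    have : ((x.filter p).card : ℤ) ≤ ⌊L⌋ := le_trans (by exact_mod_cast h1) h3
    exact_mod_cast this
  by_cases hcond : Real.logb 2 L < Real.logb 2 n
  · rw [if_pos hcond]
    set Dv : ℝ := Real.logb 2 n - Real.logb 2 L with hDdef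
    have hD0 : 0 < Dv := sub_pos.mpr hcond
    by_cases hmin : (⌈2 * L / Dv⌉ : ℝ) ≤ ((⌊L⌋ : ℤ) : ℝ)
    · rw [min_eq_left hmin]
      -- hard case
      set cl : ℤ := ⌈2 * L / Dv⌉ with hcl
      have hclpos : 0 < cl := Int.ceil_pos.mpr (by positivity)
      set l : ℕ := cl.toNat with hldef
      have hlcast : ((l : ℕ) : ℝ) = (cl : ℝ) := by
        rw [hldef]; exact_mod_cast congrArg Int.cast (Int.toNat_of_nonneg hclpos.le)
      have hl1 : 1 ≤ l := by omega
      have hlL : (l : ℝ) ≤ L := by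
        rw [hlcast]
        exact le_trans hmin (Int.floor_le L)
      have hceil : 2 * L / Dv ≤ (l : ℝ) := by rw [hlcast]; exact Int.le_ceil _
      have h2L : 2 * L ≤ Dv * (l : ℝ) := by
        rw [mul_comm Dv]
        exact (div_le_iff₀ hD0).mp hceil
      have hD2 : 2 ≤ Dv := by nlinarith
      -- s = sqrt(n/L) = 2 ^ (Dv/2)
      set s : ℝ := Real.sqrt ((n : ℝ) / L) with hsdef
      have hnL : (2:ℝ) ^ Dv = (n : ℝ) / L := by
        have hlogb : Real.logb 2 ((n:ℝ) / L) = Dv := by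
          rw [Real.logb_div (by positivity) (by positivity)]
        rw [← hlogb]
        exact Real.rpow_logb (by positivity) (by norm_num) (by positivity)
      have hs : s = (2:ℝ) ^ (Dv / 2) := by
        rw [hsdef, ← hnL, Real.sqrt_eq_rpow, ← Real.rpow_mul (by norm_num : (0:ℝ) ≤ 2)]
        congr 1; ring
      have hs2 : (2:ℝ) ≤ s := by
        rw [hs]
        calc (2:ℝ) = (2:ℝ) ^ (1:ℝ) := (Real.rpow_one 2).symm
          _ ≤ (2:ℝ) ^ (Dv / 2) :=
            Real.rpow_le_rpow_of_exponent_le one_le_two (by linarith)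
      have hs0 : 0 < s := by linarith
      have hsa : (A.card : ℝ) ≤ s ^ l := by
        have h1 : (A.card : ℝ) = (2:ℝ) ^ L := (Real.rpow_logb two_pos (by norm_num) ha0).symm
        have h2 : s ^ l = (2:ℝ) ^ (Dv / 2 * (l:ℝ)) := by
          rw [← Real.rpow_natCast s l, hs, ← Real.rpow_mul (by norm_num : (0:ℝ) ≤ 2)]
        rw [h1, h2]
        apply Real.rpow_le_rpow_of_exponent_le one_le_two
        rw [div_mul_eq_mul_div, le_div_iff₀ (by norm_num : (0:ℝ) < 2)]
        linarith
      -- the floor and the threshold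
      set B : ℤ := ⌊s * (cl : ℝ)⌋ with hBdef
      have hB0 : 0 ≤ B := Int.floor_nonneg.mpr (by positivity)
      set b : ℕ := B.toNat with hbdef
      have hbB : (b : ℤ) = B := Int.toNat_of_nonneg hB0
      set m : ℕ := b + 1 with hmdef
      have hm : s * (l : ℝ) < (m : ℝ) := by
        have h1 : s * (cl : ℝ) < (B : ℝ) + 1 := Int.lt_floor_add_one _
        have h2 : ((B:ℝ)) = (b : ℝ) := by exact_mod_cast hbB.symm
        rw [hlcast]
        push_cast
        rw [h2] at h1
        have hm3 : (m:ℝ) = (b:ℝ) + 1 := by rw [hmdef, Nat.cast_succ]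
        linarith
      have hml : 2 * (l:ℝ) ≤ (m : ℝ) := by nlinarith
      have hmlnat : 2 * l ≤ m := by exact_mod_cast hml
      -- by contradiction
      by_contra hcon
      push_neg at hcon
      have hcnat : l + 1 ≤ (x.filter (fun j : ℕ => B < (j : ℤ))).card := by
        rw [← hlcast] at hcon
        have : (l:ℝ) < ((x.filter (fun j : ℕ => B < (j : ℤ))).card : ℝ) := hcon
        exact_mod_cast this
      obtain ⟨T, hTsub, hTcard⟩ := Finset.exists_subset_card_eq hcnat
      have hTA : T ∈ A := hdown x hx T (hTsub.trans (filter_subset _ x))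
      have hTb : ∀ u ∈ T, m ≤ u := by
        intro u hu
        have := (mem_filter.mp (hTsub hu)).2
        rw [← hbB] at this
        have : b < u := by exact_mod_cast this
        omega
      have hTne : T.Nonempty := by rw [← card_pos, hTcard]; omega
      set M : ℕ := T.max' hTne with hMdef
      have hMm : m + l ≤ M := by
        have hsubIcc : T ⊆ Finset.Icc m M :=
          fun u hu => mem_Icc.mpr ⟨hTb u hu, le_max' T u hu⟩
        have := card_le_card hsubIcc
        rw [hTcard, Nat.card_Icc] at this
        omega
      -- the injected family
      set F : Finset (Finset ℕ) :=
        ((Finset.Icc (m+1) (m+l)) ×ˢ (Finset.powersetCard l (Finset.Icc 1 m))).image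
          (fun p => insert p.1 p.2) with hFdef
      have hFA : F ⊆ A := by
        intro S hS
        rw [hFdef, mem_image] at hS
        obtain ⟨⟨t, S'⟩, hp, rfl⟩ := hS
        rw [mem_product] at hp
        obtain ⟨ht, hS'⟩ := hp
        rw [mem_Icc] at ht
        rw [mem_powersetCard] at hS'
        obtain ⟨hS'sub, hS'card⟩ := hS'
        have hS'le : ∀ e ∈ S', e ≤ m := fun e he => (mem_Icc.mp (hS'sub he)).2
        have htS' : t ∉ S' := fun h => by have := hS'le t h; omega
        apply hall_mem hsub hdown hcomp ((insert t S' \ T).card) _ T rfl hTA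
        · intro e he
          rcases mem_insert.mp he with rfl | heS'
          · omega
          · exact (mem_Icc.mp (hS'sub heS')).1
        · intro y
          by_cases hym : y < m
          · have hTfull : T.filter (y < ·) = T :=
              filter_true_of_mem (fun u hu => lt_of_lt_of_le hym (hTb u hu))
            have h1 : ((insert t S').filter (y < ·)).card ≤ (insert t S').card :=
              card_filter_le _ _
            rw [hTfull, hTcard, card_insert_of_notMem htS', hS'card] at *
            omega
          · push_neg at hym
            have hsubt : (insert t S').filter (y < ·) ⊆ {t} := by
              intro e he
              rw [mem_filter] at he
              rcases mem_insert.mp he.1 with rfl | heS'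
              · exact mem_singleton_self _
              · exact absurd (hS'le e heS') (by omega)
            by_cases hty : y < t
            · have h1 : ((insert t S').filter (y < ·)).card ≤ 1 :=
                le_trans (card_le_card hsubt) (by simp)
              have hMmem : M ∈ T.filter (y < ·) := by
                refine mem_filter.mpr ⟨T.max'_mem hTne, ?_⟩
                omega
              have h2 : 1 ≤ (T.filter (y < ·)).card := card_pos.mpr ⟨M, hMmem⟩
              omega
            · have hempty : (insert t S').filter (y < ·) = ∅ := by
                rw [eq_empty_iff_forall_notMem]
                intro e he
                have := mem_singleton.mp (hsubt he)
                rw [mem_filter] at he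
                omega
              rw [hempty]
              simp
      -- counting
      have hFcard : F.card = l * Nat.choose m l := by
        rw [hFdef]
        rw [card_image_of_injOn]
        · rw [card_product, card_powersetCard, Nat.card_Icc, Nat.card_Icc]
          have e1 : m + l + 1 - (m + 1) = l := by omega
          have e2 : m + 1 - 1 = m := by omega
          rw [e1, e2]
        · rintro ⟨t, S'⟩ hp ⟨u, U'⟩ hq heq
          simp only [mem_coe, mem_product, mem_Icc, mem_powersetCard] at hp hq
          have hS'le : ∀ e ∈ S', e ≤ m := fun e he => (mem_Icc.mp (hp.2.1 he)).2
          have hU'le : ∀ e ∈ U', e ≤ m := fun e he => (mem_Icc.mp (hq.2.1 he)).2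
          have htS' : t ∉ S' := fun h => by have := hS'le t h; omega
          have huU' : u ∉ U' := fun h => by have := hU'le u h; omega
          have heq' : insert t S' = insert u U' := heq
          have htu : t = u := by
            have h1 : t ∈ insert u U' := heq' ▸ mem_insert_self t S'
            rcases mem_insert.mp h1 with h | h
            · exact h
            · have := hU'le t h; omega
          subst htu
          have hSU : S' = U' := by
            have h1 : (insert t S').erase t = S' := erase_insert htS'
            have h2 : (insert t U').erase t = U' := erase_insert huU'
            rw [← h1, ← h2, heq']
          rw [hSU]
      have hle : l * Nat.choose m l ≤ A.card := by
        rw [← hFcard]; exact card_le_card hFA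
      -- contradiction : A.card < l * choose m l
      have hfinal : A.card < l * Nat.choose m l := by
        rcases eq_or_lt_of_le hl1 with h1 | h2
        · -- l = 1
          rw [← h1]
          rw [← h1] at hsa hm
          norm_num at hsa hm
          have h3 : A.card < m := by exact_mod_cast lt_of_le_of_lt hsa hm
          simpa [Nat.choose_one_right] using h3
        · -- 2 ≤ l
          have hl2 : 2 ≤ l := h2
          have hfact : (0:ℝ) < (Nat.factorial l : ℝ) := by
            exact_mod_cast Nat.factorial_pos l
          have hA' : (2:ℝ)^l * (Nat.factorial l : ℝ) ≤ (l:ℝ)^(l+1) := by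
            exact_mod_cast lemA l hl2
          have hlm : l ≤ m := by omega
          have hcast : ((m - l + 1 : ℕ) : ℝ) = (m : ℝ) - (l : ℝ) + 1 := by
            push_cast [Nat.cast_sub hlm]
            ring
          have hchain : (A.card : ℝ) * (Nat.factorial l : ℝ)
              < ((l * Nat.choose m l : ℕ) : ℝ) * (Nat.factorial l : ℝ) := by
            have c2 : (A.card : ℝ) * (Nat.factorial l : ℝ) ≤ s^l * (Nat.factorial l : ℝ) :=
              mul_le_mul_of_nonneg_right hsa hfact.le
            have c3 : s^l * (Nat.factorial l : ℝ) = (s/2)^l * ((2:ℝ)^l * (Nat.factorial l : ℝ)) := by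
              have h2l : ((2:ℝ)^l) ≠ 0 := by positivity
              rw [div_pow]
              field_simp
            have c4 : (s/2)^l * ((2:ℝ)^l * (Nat.factorial l : ℝ)) ≤ (s/2)^l * (l:ℝ)^(l+1) :=
              mul_le_mul_of_nonneg_left hA' (by positivity)
            have c5 : (s/2)^l ≤ (s-1)^l :=
              pow_le_pow_left₀ (by linarith) (by linarith) l
            have c6 : (s/2)^l * (l:ℝ)^(l+1) ≤ (s-1)^l * (l:ℝ)^(l+1) :=
              mul_le_mul_of_nonneg_right c5 (by positivity)
            have c7 : (s-1)^l * (l:ℝ)^(l+1) = ((s-1)*(l:ℝ))^l * (l:ℝ) := by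
              rw [mul_pow, pow_succ]
              ring
            have c8 : ((s-1)*(l:ℝ))^l < ((m - l + 1 : ℕ) : ℝ)^l := by
              have hl0R : (0:ℝ) ≤ (l:ℝ) := by positivity
              have hbase0 : (0:ℝ) ≤ (s-1)*(l:ℝ) := mul_nonneg (by linarith) hl0R
              have hexp : (s-1)*(l:ℝ) = s*(l:ℝ) - (l:ℝ) := by ring
              have hbaselt : (s-1)*(l:ℝ) < ((m - l + 1 : ℕ) : ℝ) := by
                rw [hexp, hcast]
                have hlm' : (l:ℝ) ≤ (m:ℝ) := by exact_mod_cast hlm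
                linarith
              exact pow_lt_pow_left₀ hbaselt hbase0 (by omega)
            have c9 : ((s-1)*(l:ℝ))^l * (l:ℝ) < ((m - l + 1 : ℕ) : ℝ)^l * (l:ℝ) := by
              apply mul_lt_mul_of_pos_right c8
              exact_mod_cast hl1
            have c10 : (m - l + 1 : ℕ)^l * l ≤ (Nat.factorial l * Nat.choose m l) * l := by
              apply Nat.mul_le_mul_right
              calc (m - l + 1 : ℕ)^l = (m + 1 - l)^l := by congr 1; omega
                _ ≤ Nat.descFactorial m l := Nat.pow_sub_le_descFactorial m l
                _ = Nat.factorial l * Nat.choose m l := Nat.descFactorial_eq_factorial_mul_choose m l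
            have c10' : ((m - l + 1 : ℕ) : ℝ)^l * (l:ℝ)
                ≤ ((l * Nat.choose m l : ℕ) : ℝ) * (Nat.factorial l : ℝ) := by
              have := c10
              have hr : ((m - l + 1 : ℕ)^l * l : ℕ) ≤ ((Nat.factorial l * Nat.choose m l) * l : ℕ) := c10
              calc ((m - l + 1 : ℕ) : ℝ)^l * (l:ℝ) = (((m - l + 1 : ℕ)^l * l : ℕ) : ℝ) := by push_cast; ring
                _ ≤ (((Nat.factorial l * Nat.choose m l) * l : ℕ) : ℝ) := by exact_mod_cast hr
                _ = ((l * Nat.choose m l : ℕ) : ℝ) * (Nat.factorial l : ℝ) := by push_cast; ring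
            calc (A.card : ℝ) * (Nat.factorial l : ℝ)
                ≤ s^l * (Nat.factorial l : ℝ) := c2
              _ = (s/2)^l * ((2:ℝ)^l * (Nat.factorial l : ℝ)) := c3
              _ ≤ (s/2)^l * (l:ℝ)^(l+1) := c4
              _ ≤ (s-1)^l * (l:ℝ)^(l+1) := c6
              _ = ((s-1)*(l:ℝ))^l * (l:ℝ) := c7
              _ < ((m - l + 1 : ℕ) : ℝ)^l * (l:ℝ) := c9
              _ ≤ ((l * Nat.choose m l : ℕ) : ℝ) * (Nat.factorial l : ℝ) := c10'
          have : (A.card : ℝ) < ((l * Nat.choose m l : ℕ) : ℝ) :=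
            lt_of_mul_lt_mul_right hchain hfact.le
          exact_mod_cast this
      omega
    · rw [min_eq_right (le_of_not_ge hmin)]
      exact heasy _ _
  · rw [if_neg hcond]
    exact heasy _ _
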